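/- Invariance of the ordered band under the one-way scheme: let H_λ(a,b,c,v) = b − μ(g(b,c,v) − g(a,b,v)) be monotone in (a,b,c) under CFL Lμ ≤ 1/2. Suppose (c_jⁿ)_{j∈ℤ} is nondecreasing for j ≤ 0 and for j ≥ 1, with c₋ ≤ c_jⁿ ≤ c₋+λ for j ≤ 0, c₊−λ ≤ c_jⁿ ≤ c₊ for j ≥ 1, c₀ⁿ − c₁ⁿ ≤ λ, and c₊ ≤ c₋ ≤ c₊+λ. Then the updated sequence defined by c_jⁿ⁺¹ = H_λ(c_{j−1}ⁿ, c_jⁿ, c_{j+1}ⁿ, v) for j ∉ {0,1}, c₀ⁿ⁺¹ = H_λ(c₋₁ⁿ, c₀ⁿ, c₁ⁿ+λ, v), c₁ⁿ⁺¹ = H_λ(c₀ⁿ−λ, c₁ⁿ, c₂ⁿ, v), satisfies the same properties, including c₀ⁿ⁺¹ − c₁ⁿ⁺¹ ≤ λ. -/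

import Mathlib

/-- Invariance of the ordered band under the one-way scheme around the particle. -/
theorem one_way_scheme_invariance
    (l μ L v cm cp : ℝ) (g : ℝ → ℝ → ℝ → ℝ) (c c' : ℤ → ℝ)
    (hl : 0 < l) (hμ : 0 < μ) (hL : 0 < L) (hcfl : L * μ ≤ 1 / 2)
    (hmono : ∀ a a' b b' d d' : ℝ, a ≤ a' → b ≤ b' → d ≤ d' →
      b - μ * (g b d v - g a b v) ≤ b' - μ * (g b' d' v - g a' b' v))
    (hlip1 : ∀ a a' b : ℝ, |g a b v - g a' b v| ≤ L * |a - a'|)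
    (hlip2 : ∀ a b b' : ℝ, |g a b v - g a b' v| ≤ L * |b - b'|)
    (hcmp : cp ≤ cm) (hcml : cm ≤ cp + l)
    (hmono_neg : ∀ i j : ℤ, i ≤ j → j ≤ 0 → c i ≤ c j)
    (hmono_pos : ∀ i j : ℤ, 1 ≤ i → i ≤ j → c i ≤ c j)
    (hbnd_neg : ∀ j : ℤ, j ≤ 0 → cm ≤ c j ∧ c j ≤ cm + l)
    (hbnd_pos : ∀ j : ℤ, 1 ≤ j → cp - l ≤ c j ∧ c j ≤ cp)
    (hjump : c 0 - c 1 ≤ l)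
    (hupd : ∀ j : ℤ, j ≠ 0 → j ≠ 1 →
      c' j = c j - μ * (g (c j) (c (j + 1)) v - g (c (j - 1)) (c j) v))
    (hupd0 : c' 0 = c 0 - μ * (g (c 0) (c 1 + l) v - g (c (-1)) (c 0) v))
    (hupd1 : c' 1 = c 1 - μ * (g (c 1) (c 2) v - g (c 0 - l) (c 1) v)) :
    (∀ i j : ℤ, i ≤ j → j ≤ 0 → c' i ≤ c' j) ∧
    (∀ i j : ℤ, 1 ≤ i → i ≤ j → c' i ≤ c' j) ∧
    (∀ j : ℤ, j ≤ 0 → cm ≤ c' j ∧ c' j ≤ cm + l) ∧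
    (∀ j : ℤ, 1 ≤ j → cp - l ≤ c' j ∧ c' j ≤ cp) ∧
    c' 0 - c' 1 ≤ l := by
  set H : ℝ → ℝ → ℝ → ℝ := fun a b d => b - μ * (g b d v - g a b v) with hHdef
  have hHmono : ∀ a a' b b' d d' : ℝ, a ≤ a' → b ≤ b' → d ≤ d' →
      H a b d ≤ H a' b' d' := fun a a' b b' d d' h1 h2 h3 => hmono a a' b b' d d' h1 h2 h3
  have hHconst : ∀ x : ℝ, H x x x = x := by
    intro x; simp only [hHdef]; ring
  have hupd' : ∀ j : ℤ, j ≠ 0 → j ≠ 1 → c' j = H (c (j - 1)) (c j) (c (j + 1)) := hupd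
  have hupd0' : c' 0 = H (c (-1)) (c 0) (c 1 + l) := hupd0
  have hupd1' : c' 1 = H (c 0 - l) (c 1) (c 2) := hupd1
  have hc0m := hbnd_neg 0 le_rfl
  have hc1p := hbnd_pos 1 le_rfl
  have hc0c1 : c 1 ≤ c 0 := le_trans (le_trans hc1p.2 hcmp) hc0m.1
  have hc0le : c 0 ≤ c 1 + l := by linarith
  have hc1la : cm ≤ c 1 + l := le_trans hc0m.1 hc0le
  have hc1lb : c 1 + l ≤ cm + l := by linarith [le_trans hc1p.2 hcmp]
  have hc0la : cp - l ≤ c 0 - l := by linarith [le_trans hcmp hc0m.1]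
  have hc0lb : c 0 - l ≤ cp := by linarith [hc1p.2]
  -- adjacent monotonicity on the negative side
  have step_neg : ∀ j : ℤ, j + 1 ≤ 0 → c' j ≤ c' (j + 1) := by
    intro j hj
    rcases eq_or_lt_of_le hj with h0 | h0
    · have hj1 : j = -1 := by omega
      subst hj1
      have e0 : (-1 : ℤ) + 1 = 0 := by norm_num
      rw [e0, hupd' (-1) (by norm_num) (by norm_num), hupd0']
      have e1 : ((-1 : ℤ)) - 1 = -2 := by norm_num
      have e2 : ((-1 : ℤ)) + 1 = 0 := by norm_num
      rw [e1, e2]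
      exact hHmono _ _ _ _ _ _ (hmono_neg (-2) (-1) (by norm_num) (by norm_num))
        (hmono_neg (-1) 0 (by norm_num) le_rfl) hc0le
    · have hj2 : j ≤ -2 := by omega
      rw [hupd' j (by omega) (by omega), hupd' (j + 1) (by omega) (by omega)]
      have e1 : j + 1 - 1 = j := by ring
      rw [e1]
      exact hHmono _ _ _ _ _ _ (hmono_neg (j - 1) j (by omega) (by omega))
        (hmono_neg j (j + 1) (by omega) (by omega))
        (hmono_neg (j + 1) (j + 1 + 1) (by omega) (by omega))
  -- adjacent monotonicity on the positive side
  have step_pos : ∀ j : ℤ, 1 ≤ j → c' j ≤ c' (j + 1) := by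
    intro j hj
    rcases eq_or_lt_of_le hj with h0 | h0
    · have hj1 : j = 1 := h0.symm
      subst hj1
      rw [show (1 : ℤ) + 1 = 2 from by norm_num, hupd1', hupd' 2 (by norm_num) (by norm_num)]
      have e1 : (2 : ℤ) - 1 = 1 := by norm_num
      rw [e1, show (2 : ℤ) + 1 = 3 from by norm_num]
      exact hHmono _ _ _ _ _ _ (by linarith [hc1p.1])
        (hmono_pos 1 2 le_rfl (by norm_num)) (hmono_pos 2 3 (by norm_num) (by norm_num))
    · have hj2 : 2 ≤ j := by omega
      rw [hupd' j (by omega) (by omega), hupd' (j + 1) (by omega) (by omega)]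
      have e1 : j + 1 - 1 = j := by ring
      rw [e1]
      exact hHmono _ _ _ _ _ _ (hmono_pos (j - 1) j (by omega) (by omega))
        (hmono_pos j (j + 1) (by omega) (by omega))
        (hmono_pos (j + 1) (j + 1 + 1) (by omega) (by omega))
  refine ⟨?_, ?_, ?_, ?_, ?_⟩
  · intro i j hij hj0
    exact Int.le_induction (motive := fun k _ => k ≤ 0 → c' i ≤ c' k) (fun _ => le_rfl)
      (fun n _ ih h => le_trans (ih (by omega)) (step_neg n (by omega))) j hij hj0
  · intro i j hi hij
    exact Int.le_induction (motive := fun k _ => c' i ≤ c' k) le_rfl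
      (fun n hn ih => le_trans ih (step_pos n (by omega))) j hij
  · intro j hj
    rcases eq_or_lt_of_le hj with h0 | h0
    · rw [h0, hupd0']
      constructor
      · calc cm = H cm cm cm := (hHconst cm).symm
          _ ≤ _ := hHmono _ _ _ _ _ _ (hbnd_neg (-1) (by norm_num)).1 hc0m.1 hc1la
      · calc H (c (-1)) (c 0) (c 1 + l) ≤ H (cm + l) (cm + l) (cm + l) :=
              hHmono _ _ _ _ _ _ (hbnd_neg (-1) (by norm_num)).2 hc0m.2 hc1lb
          _ = cm + l := hHconst _
    · rw [hupd' j (by omega) (by omega)]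
      have ha := hbnd_neg (j - 1) (by omega)
      have hb := hbnd_neg j (by omega)
      have hd := hbnd_neg (j + 1) (by omega)
      constructor
      · calc cm = H cm cm cm := (hHconst cm).symm
          _ ≤ _ := hHmono _ _ _ _ _ _ ha.1 hb.1 hd.1
      · calc H (c (j - 1)) (c j) (c (j + 1)) ≤ H (cm + l) (cm + l) (cm + l) :=
              hHmono _ _ _ _ _ _ ha.2 hb.2 hd.2
          _ = cm + l := hHconst _
  · intro j hj
    rcases eq_or_lt_of_le hj with h0 | h0
    · rw [← h0, hupd1']
      constructor
      · calc cp - l = H (cp - l) (cp - l) (cp - l) := (hHconst _).symm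
          _ ≤ _ := hHmono _ _ _ _ _ _ hc0la hc1p.1 (hbnd_pos 2 (by norm_num)).1
      · calc H (c 0 - l) (c 1) (c 2) ≤ H cp cp cp :=
              hHmono _ _ _ _ _ _ hc0lb hc1p.2 (hbnd_pos 2 (by norm_num)).2
          _ = cp := hHconst _
    · rw [hupd' j (by omega) (by omega)]
      have ha := hbnd_pos (j - 1) (by omega)
      have hb := hbnd_pos j (by omega)
      have hd := hbnd_pos (j + 1) (by omega)
      constructor
      · calc cp - l = H (cp - l) (cp - l) (cp - l) := (hHconst _).symm
          _ ≤ _ := hHmono _ _ _ _ _ _ ha.1 hb.1 hd.1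
      · calc H (c (j - 1)) (c j) (c (j + 1)) ≤ H cp cp cp :=
              hHmono _ _ _ _ _ _ ha.2 hb.2 hd.2
          _ = cp := hHconst _
  · -- c' 0 - c' 1 ≤ l
    have h1 : c' 0 ≤ H (c 0) (c 0) (c 1 + l) := by
      rw [hupd0']
      exact hHmono _ _ _ _ _ _ (hmono_neg (-1) 0 (by norm_num) le_rfl) le_rfl le_rfl
    have h2 : H (c 0 - l) (c 1) (c 1) ≤ c' 1 := by
      rw [hupd1']
      exact hHmono _ _ _ _ _ _ le_rfl le_rfl (hmono_pos 1 2 le_rfl (by norm_num))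
    have e1 := hlip2 (c 0) (c 1 + l) (c 0)
    have e2 := hlip1 (c 1) (c 0 - l) (c 1)
    have habs1 : |c 1 + l - c 0| = l - (c 0 - c 1) := by
      rw [abs_of_nonneg (by linarith)]; ring
    have habs2 : |c 1 - (c 0 - l)| = l - (c 0 - c 1) := by
      rw [abs_of_nonneg (by linarith)]; ring
    rw [habs1] at e1
    rw [habs2] at e2
    have hX := (abs_le.mp e1).1
    have hY := (abs_le.mp e2).2
    have b1 : -(μ * (L * (l - (c 0 - c 1)))) ≤ μ * (g (c 0) (c 1 + l) v - g (c 0) (c 0) v) := by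
      have h := mul_le_mul_of_nonneg_left hX hμ.le
      have hr : μ * -(L * (l - (c 0 - c 1))) = -(μ * (L * (l - (c 0 - c 1)))) := by ring
      linarith [hr ▸ h]
    have b2 : μ * (g (c 1) (c 1) v - g (c 0 - l) (c 1) v) ≤ μ * (L * (l - (c 0 - c 1))) :=
      mul_le_mul_of_nonneg_left hY hμ.le
    have b3 : μ * (L * (l - (c 0 - c 1))) ≤ (1 / 2) * (l - (c 0 - c 1)) := by
      have hs : 0 ≤ l - (c 0 - c 1) := by linarith
      have h := mul_le_mul_of_nonneg_right (show μ * L ≤ 1 / 2 by linarith) hs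
      have hr : μ * L * (l - (c 0 - c 1)) = μ * (L * (l - (c 0 - c 1))) := by ring
      linarith [hr ▸ h]
    have hH1 : H (c 0) (c 0) (c 1 + l) = c 0 - μ * (g (c 0) (c 1 + l) v - g (c 0) (c 0) v) := rfl
    have hH2 : H (c 0 - l) (c 1) (c 1) = c 1 - μ * (g (c 1) (c 1) v - g (c 0 - l) (c 1) v) := rfl
    have hfin := sub_le_sub h1 h2
    rw [hH1, hH2] at hfin
    linarith [hfin, b1, b2, b3]
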